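/- Let K : ℝ × ℝ → ℝ be continuously differentiable with ∂₁K(x,y) = −∂₁K(y,x) for all x, y. Fix x ∈ ℝ and assume that the functions y ↦ K(x,y)·K(y,x) and y ↦ ∂₁K(x,y)·∫_x^y K(x,t) dt are Lebesgue integrable on ℝ, that K(y,x) → 0 as y → ±∞, and that the limits L₊ = lim_{y→+∞} K(y,x)·∫_x^y K(x,t) dt and L₋ = lim_{y→−∞} K(y,x)·∫_x^y K(x,t) dt exist. Then ∫_ℝ det𝕂₁(x,y) dy − K(x,x) = 2·Def_K(x) − (L₊ − L₋), the integral of the sign term being understood as the sum of the improper integrals over (−∞, x] and [x, ∞). -/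

import Mathlib

open MeasureTheory Filter
open Set

theorem stmt_13 (K : ℝ → ℝ → ℝ)
    (hK : ContDiff ℝ 1 fun p : ℝ × ℝ => K p.1 p.2)
    (hskew : ∀ x y : ℝ, deriv (fun t => K t y) x = - deriv (fun t => K t x) y)
    (x : ℝ)
    (hint1 : Integrable fun y => K x y * K y x)
    (hint2 : Integrable fun y => deriv (fun t => K t y) x * ∫ t in x..y, K x t)
    (hlim1 : Tendsto (fun y => K y x) atTop (nhds 0))
    (hlim1' : Tendsto (fun y => K y x) atBot (nhds 0))
    (Lp Lm : ℝ)
    (hLp : Tendsto (fun y => K y x * ∫ t in x..y, K x t) atTop (nhds Lp))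
    (hLm : Tendsto (fun y => K y x * ∫ t in x..y, K x t) atBot (nhds Lm)) :
    -- `∫_ℝ det𝕂₁(x,y) dy − K(x,x) = 2·Def_K(x) − (L₊ − L₋)`, where the integral of
    -- the sign term `(1/2)·sgn(x−y)·∂₁K(x,y)` is understood as the sum of the
    -- improper integrals over `(−∞, x]` and `[x, ∞)`, and
    -- `Def_K(x) = ∫_ℝ K(x,y)·K(y,x) dy − K(x,x)`.
    ∃ Am Ap : ℝ,
      Tendsto (fun a : ℝ =>
          ∫ y in a..x, (1/2) * Real.sign (x - y) * deriv (fun t => K t y) x)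
        atBot (nhds Am) ∧
      Tendsto (fun b : ℝ =>
          ∫ y in x..b, (1/2) * Real.sign (x - y) * deriv (fun t => K t y) x)
        atTop (nhds Ap) ∧
      ((∫ y : ℝ, (K x y * K y x + deriv (fun t => K t y) x * ∫ t in x..y, K x t))
          + (Am + Ap)) - K x x
        = 2 * ((∫ y : ℝ, K x y * K y x) - K x x) - (Lp - Lm) := by
  -- g y = K y x is C¹
  have hg : ContDiff ℝ 1 (fun y : ℝ => K y x) :=
    hK.comp (contDiff_id.prodMk contDiff_const)
  have hgd : ∀ y : ℝ, HasDerivAt (fun t => K t x) (deriv (fun t => K t x) y) y :=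
    fun y => (hg.differentiable one_ne_zero y).hasDerivAt
  have hgc : Continuous fun y => deriv (fun t => K t x) y := hg.continuous_deriv le_rfl
  -- K x · is continuous
  have hKx : Continuous fun t => K x t := hK.continuous.comp (continuous_const.prodMk continuous_id)
  -- F
  set F : ℝ → ℝ := fun y => ∫ t in x..y, K x t with hFdef
  have hF : ∀ y : ℝ, HasDerivAt F (K x y) y := by
    intro y
    exact intervalIntegral.integral_hasDerivAt_right (hKx.intervalIntegrable _ _)
      (hKx.stronglyMeasurableAtFilter _ _) hKx.continuousAt
  have hFx : F x = 0 := intervalIntegral.integral_same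
  -- product derivative
  have hprod : ∀ y : ℝ, HasDerivAt (fun y => K y x * F y)
      (deriv (fun t => K t x) y * F y + K y x * K x y) y :=
    fun y => (hgd y).mul (hF y)
  -- integrability of the product derivative
  have hint1' : Integrable fun y => K y x * K x y := by
    refine hint1.congr ?_
    exact Eventually.of_forall fun y => by ring
  have hint2' : Integrable fun y => deriv (fun t => K t x) y * F y := by
    refine hint2.neg.congr (Eventually.of_forall fun y => ?_)
    simp only [Pi.neg_apply]
    rw [hskew x y]; ring
  have hinth : Integrable fun y => deriv (fun t => K t x) y * F y + K y x * K x y :=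
    hint2'.add hint1'
  -- integral of the product derivative equals Lp - Lm
  have hIoi : ∫ y in Ioi x, (deriv (fun t => K t x) y * F y + K y x * K x y)
      = Lp - K x x * F x :=
    integral_Ioi_of_hasDerivAt_of_tendsto'
      (fun y _ => hprod y) hinth.integrableOn hLp
  have hIic : ∫ y in Iic x, (deriv (fun t => K t x) y * F y + K y x * K x y)
      = K x x * F x - Lm :=
    integral_Iic_of_hasDerivAt_of_tendsto'
      (fun y _ => hprod y) hinth.integrableOn hLm
  have hsplit : ∫ y : ℝ, (deriv (fun t => K t x) y * F y + K y x * K x y)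
      = Lp - Lm := by
    rw [← intervalIntegral.integral_Iic_add_Ioi hinth.integrableOn hinth.integrableOn, hIoi, hIic, hFx]
    ring
  -- value of ∫ ∂₁K F
  have hkey : (∫ y : ℝ, deriv (fun t => K t y) x * F y)
      = (∫ y : ℝ, K x y * K y x) - (Lp - Lm) := by
    have : (fun y => deriv (fun t => K t y) x * F y)
        = fun y => (K x y * K y x) - (deriv (fun t => K t x) y * F y + K y x * K x y) := by
      funext y; rw [hskew x y]; ring
    rw [this, integral_sub hint1 hinth, hsplit]
  -- Am and Ap
  refine ⟨-(1/2) * K x x, -(1/2) * K x x, ?_, ?_, ?_⟩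
  · -- atBot
    have hev : ∀ᶠ a in atBot, (∫ y in a..x, (1/2) * Real.sign (x - y) * deriv (fun t => K t y) x)
        = -(1/2) * (K x x - K a x) := by
      filter_upwards [Iic_mem_atBot x] with a (ha : a ≤ x)
      have hcg : (∫ y in a..x, (1/2) * Real.sign (x - y) * deriv (fun t => K t y) x)
          = ∫ y in a..x, -(1/2) * deriv (fun t => K t x) y := by
        refine intervalIntegral.integral_congr_ae ?_
        have hx0 : (volume : Measure ℝ) {x} = 0 := measure_singleton x
        filter_upwards [compl_mem_ae_iff.2 hx0] with y (hy : y ≠ x) hmem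
        rw [Set.uIoc_of_le ha] at hmem
        have hyx : y < x := lt_of_le_of_ne hmem.2 hy
        rw [hskew x y, Real.sign_of_pos (by linarith : (0:ℝ) < x - y)]
        ring
      rw [hcg, intervalIntegral.integral_const_mul,
        intervalIntegral.integral_deriv_eq_sub (fun y _ => (hg.differentiable one_ne_zero y))
          (hgc.intervalIntegrable _ _)]
    refine Tendsto.congr' (EventuallyEq.symm hev) ?_
    have : Tendsto (fun a : ℝ => -(1/2) * (K x x - K a x)) atBot
        (nhds (-(1/2) * (K x x - 0))) :=
      (tendsto_const_nhds.sub hlim1').const_mul _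
    simpa using this
  · -- atTop
    have hev : ∀ᶠ b in atTop, (∫ y in x..b, (1/2) * Real.sign (x - y) * deriv (fun t => K t y) x)
        = (1/2) * (K b x - K x x) := by
      filter_upwards [Ici_mem_atTop x] with b (hb : x ≤ b)
      have hcg : (∫ y in x..b, (1/2) * Real.sign (x - y) * deriv (fun t => K t y) x)
          = ∫ y in x..b, (1/2) * deriv (fun t => K t x) y := by
        refine intervalIntegral.integral_congr_ae ?_
        have hx0 : (volume : Measure ℝ) {x} = 0 := measure_singleton x
        filter_upwards [compl_mem_ae_iff.2 hx0] with y (hy : y ≠ x) hmem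
        rw [Set.uIoc_of_le hb] at hmem
        have hyx : x < y := hmem.1
        rw [hskew x y, Real.sign_of_neg (by linarith : x - y < 0)]
        ring
      rw [hcg, intervalIntegral.integral_const_mul,
        intervalIntegral.integral_deriv_eq_sub (fun y _ => (hg.differentiable one_ne_zero y))
          (hgc.intervalIntegrable _ _)]
    refine Tendsto.congr' (EventuallyEq.symm hev) ?_
    have : Tendsto (fun b : ℝ => (1/2) * (K b x - K x x)) atTop
        (nhds ((1/2) * (0 - K x x))) :=
      (hlim1.sub tendsto_const_nhds).const_mul _
    simpa using this
  · -- final identity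
    rw [integral_add hint1 hint2, hkey]
    ring
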